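/- If F : H → ℝ is convex and differentiable with L-Lipschitz gradient, has a nonempty set of minimizers X*, and satisfies the Polyak-Łojasiewicz condition with parameter μ > 0, then F is quasi-strongly convex with parameter β = μ²/L: for every x ∈ H and every projection x̄ of x onto X*, F(x̄) ≥ F(x) + ⟨∇F(x), x̄ - x⟩ + (μ²/(2L))‖x - x̄‖². -/

import Mathlib

set_option maxHeartbeats 1000000

open RealInnerProductSpace InnerProductSpace

section Helpers
variable {H : Type*} [NormedAddCommGroup H] [InnerProductSpace ℝ H] [CompleteSpace H]


lemma line_hasDerivAt (F : H → ℝ) (F' : H → H) (hdiff : ∀ x, HasGradientAt F (F' x) x)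
    (x v : H) (t : ℝ) :
    HasDerivAt (fun s : ℝ => F (x + s • v)) ⟪F' (x + t • v), v⟫ t := by
  have h1 : HasDerivAt (fun s : ℝ => x + s • v) v t := by
    simpa using ((hasDerivAt_id t).smul_const v).const_add x
  have h2 := (hdiff (x + t • v)).hasFDerivAt.comp_hasDerivAt t h1
  simpa [toDual_apply_apply, Function.comp_def] using h2

lemma convex_grad_ineq (F : H → ℝ) (F' : H → H) (hdiff : ∀ x, HasGradientAt F (F' x) x)
    (hconv : ConvexOn ℝ Set.univ F) (x y : H) :
    F x + ⟪F' x, y - x⟫ ≤ F y := by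
  have heq : (F ∘ ⇑(AffineMap.lineMap x y)) = fun t : ℝ => F (x + t • (y - x)) := by
    funext t
    simp [AffineMap.lineMap_apply, add_comm]
  have haff : ConvexOn ℝ Set.univ (fun t : ℝ => F (x + t • (y - x))) := by
    have h := hconv.comp_affineMap (AffineMap.lineMap x y)
    rw [heq] at h
    simpa using h
  have hd := line_hasDerivAt F F' hdiff x (y - x) 0
  have hslope := haff.le_slope_of_hasDerivAt (Set.mem_univ (0:ℝ)) (Set.mem_univ 1)
    one_pos (by simpa using hd)
  rw [slope_def_field] at hslope
  simp at hslope
  linarith [hslope]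

lemma descent_lemma (F : H → ℝ) (F' : H → H) (hdiff : ∀ x, HasGradientAt F (F' x) x)
    (L : ℝ) (hL : 0 < L) (hlip : LipschitzWith (Real.toNNReal L) F') (x y : H) :
    F y ≤ F x + ⟪F' x, y - x⟫ + L / 2 * ‖y - x‖ ^ 2 := by
  set v := y - x with hv
  set ψ : ℝ → ℝ := fun t => F (x + t • v) - t * ⟪F' x, v⟫ - L * t ^ 2 / 2 * ‖v‖ ^ 2 with hψ
  have hder : ∀ t : ℝ, HasDerivAt ψ (⟪F' (x + t • v), v⟫ - ⟪F' x, v⟫ - L * t * ‖v‖ ^ 2) t := by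
    intro t
    have h1 := line_hasDerivAt F F' hdiff x v t
    have h2 : HasDerivAt (fun t : ℝ => t * ⟪F' x, v⟫) ⟪F' x, v⟫ t := by
      simpa using (hasDerivAt_id t).mul_const ⟪F' x, v⟫
    have h3 : HasDerivAt (fun t : ℝ => L * t ^ 2 / 2 * ‖v‖ ^ 2) (L * t * ‖v‖ ^ 2) t := by
      have := ((hasDerivAt_pow 2 t).const_mul L).div_const 2
      have h4 := this.mul_const (‖v‖ ^ 2)
      refine h4.congr_deriv ?_
      ring
    exact (h1.sub h2).sub h3
  have hanti : AntitoneOn ψ (Set.Icc 0 1) := by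
    apply antitoneOn_of_deriv_nonpos (convex_Icc 0 1)
    · exact (Differentiable.continuous (fun t => (hder t).differentiableAt)).continuousOn
    · exact fun t ht => (hder t).differentiableAt.differentiableWithinAt
    · intro t ht
      rw [interior_Icc] at ht
      rw [(hder t).deriv]
      have hcs : ⟪F' (x + t • v) - F' x, v⟫ ≤ ‖F' (x + t • v) - F' x‖ * ‖v‖ :=
        real_inner_le_norm _ _
      have hlipb : ‖F' (x + t • v) - F' x‖ ≤ L * (t * ‖v‖) := by
        have := hlip.dist_le_mul (x + t • v) x
        rw [dist_eq_norm, dist_eq_norm] at this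
        simpa [Real.coe_toNNReal L hL.le, norm_smul, abs_of_pos ht.1,
          mul_assoc] using this
      have : ⟪F' (x + t • v), v⟫ - ⟪F' x, v⟫ ≤ L * t * ‖v‖ ^ 2 := by
        rw [← inner_sub_left]
        calc _ ≤ ‖F' (x + t • v) - F' x‖ * ‖v‖ := hcs
        _ ≤ L * (t * ‖v‖) * ‖v‖ := by
            apply mul_le_mul_of_nonneg_right hlipb (norm_nonneg _)
        _ = L * t * ‖v‖ ^ 2 := by ring
      linarith
  have h01 := hanti (Set.left_mem_Icc.2 zero_le_one) (Set.right_mem_Icc.2 zero_le_one) zero_le_one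
  have hxy : x + v = y := by simp [hv]
  simp [hψ, hxy] at h01
  linarith [h01]

lemma grad_zero_at_min (F : H → ℝ) (F' : H → H) (hdiff : ∀ x, HasGradientAt F (F' x) x)
    (z : H) (hmin : ∀ y, F z ≤ F y) : F' z = 0 := by
  have hloc : IsLocalMin F z := Filter.Eventually.of_forall hmin
  have h0 := hloc.hasFDerivAt_eq_zero (hdiff z).hasFDerivAt
  have := (InnerProductSpace.toDual ℝ H).map_eq_zero_iff.mp (by simpa using h0)
  exact this

lemma baillon_haddad (F : H → ℝ) (F' : H → H) (hdiff : ∀ x, HasGradientAt F (F' x) x)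
    (hconv : ConvexOn ℝ Set.univ F)
    (L : ℝ) (hL : 0 < L) (hlip : LipschitzWith (Real.toNNReal L) F') (x y : H) :
    F x + ⟪F' x, y - x⟫ + 1 / (2 * L) * ‖F' y - F' x‖ ^ 2 ≤ F y := by
  set φ : H → ℝ := fun z => F z - ⟪F' x, z⟫ with hφ
  set G : H → H := fun z => F' z - F' x with hG
  have hGdiff : ∀ z, HasGradientAt φ (G z) z := by
    intro z
    have h1 : HasFDerivAt (fun w => ⟪F' x, w⟫) (InnerProductSpace.toDual ℝ H (F' x)) z := by
      exact
        (InnerProductSpace.toDual ℝ H (F' x)).hasFDerivAt (x := z)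
    have h2 := (hdiff z).hasFDerivAt.sub h1
    have h3 : InnerProductSpace.toDual ℝ H (F' z) - InnerProductSpace.toDual ℝ H (F' x)
        = InnerProductSpace.toDual ℝ H (G z) := by
      rw [hG]; simp
    rw [h3] at h2
    simpa [hφ, Pi.sub_def] using h2.hasGradientAt
  have hGlip : LipschitzWith (Real.toNNReal L) G := by
    apply LipschitzWith.of_dist_le_mul
    intro a b
    have := hlip.dist_le_mul a b
    simpa [hG, dist_eq_norm, sub_sub_sub_cancel_right] using this
  set z := y - (1 / L) • G y with hz
  have hd := descent_lemma φ G hGdiff L hL hGlip y z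
  have hzy : z - y = -((1 / L) • G y) := by rw [hz]; abel
  have hinner : ⟪G y, z - y⟫ = -(1 / L) * ‖G y‖ ^ 2 := by
    rw [hzy, inner_neg_right, real_inner_smul_right, real_inner_self_eq_norm_sq]
    ring
  have hnorm : ‖z - y‖ ^ 2 = (1 / L) ^ 2 * ‖G y‖ ^ 2 := by
    rw [hzy, norm_neg, norm_smul]
    rw [Real.norm_eq_abs, abs_of_pos (by positivity : (0:ℝ) < 1 / L)]
    ring
  have hkey : φ z ≤ φ y - 1 / (2 * L) * ‖G y‖ ^ 2 := by
    rw [hinner, hnorm] at hd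
    calc φ z ≤ φ y + -(1 / L) * ‖G y‖ ^ 2 + L / 2 * ((1 / L) ^ 2 * ‖G y‖ ^ 2) := hd
    _ = φ y - 1 / (2 * L) * ‖G y‖ ^ 2 := by field_simp; ring
  have hmin : φ x ≤ φ z := by
    have := convex_grad_ineq F F' hdiff hconv x z
    rw [inner_sub_right] at this
    simp only [hφ]
    linarith
  have hfin := hmin.trans hkey
  simp only [hφ, hG] at hfin
  have : ⟪F' x, y⟫ - ⟪F' x, x⟫ = ⟪F' x, y - x⟫ := (inner_sub_right _ _ _).symm
  linarith

lemma pl_dist_bound (F : H → ℝ) (F' : H → H) (hdiff : ∀ x, HasGradientAt F (F' x) x)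
    (L : ℝ) (hL : 0 < L) (hlip : LipschitzWith (Real.toNNReal L) F')
    (Fstar : ℝ) (hstar : ∀ y, Fstar ≤ F y)
    (μ : ℝ) (hμ : 0 < μ) (hpl : ∀ x, F x - Fstar ≤ 1 / (2 * μ) * ‖F' x‖ ^ 2)
    (x₀ : H) (η : ℝ) (hη : 0 < η) (hηL : η * L ≤ 1) :
    ∃ p : H, (∀ y, F p ≤ F y) ∧
      ‖x₀ - p‖ ≤ 2 * η / ((η - L * η ^ 2 / 2) * Real.sqrt (2 * μ)) *
        Real.sqrt (F x₀ - Fstar) := by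
  set c : ℝ := η - L * η ^ 2 / 2 with hcdef
  have hc : 0 < c := by rw [hcdef]; nlinarith [mul_le_mul_of_nonneg_right hηL hη.le]
  set s : ℝ := Real.sqrt (2 * μ) with hsdef
  have hs : 0 < s := Real.sqrt_pos.2 (by linarith)
  have hs2 : s ^ 2 = 2 * μ := Real.sq_sqrt (by linarith)
  set K : ℝ := 2 * η / (c * s) with hKdef
  have hK0 : 0 ≤ K := by positivity
  -- one-step estimates
  have hstep : ∀ z : H,
      F (z - η • F' z) - Fstar ≤ (1 - 2 * μ * c) * (F z - Fstar) ∧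
      ‖(z - η • F' z) - z‖ ≤
        K * (Real.sqrt (F z - Fstar) - Real.sqrt (F (z - η • F' z) - Fstar)) := by
    intro z
    set w : H := z - η • F' z with hwdef
    set g : ℝ := ‖F' z‖ with hgdef
    have hg0 : 0 ≤ g := norm_nonneg _
    have hwz : w - z = -(η • F' z) := by rw [hwdef]; abel
    have hwznorm : ‖w - z‖ = η * g := by
      rw [hwz, norm_neg, norm_smul, Real.norm_eq_abs, abs_of_pos hη]
    have hdesc : F w ≤ F z - c * g ^ 2 := by
      have hd := descent_lemma F F' hdiff L hL hlip z w
      have hinner : ⟪F' z, w - z⟫ = -η * g ^ 2 := by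
        rw [hwz, inner_neg_right, real_inner_smul_right, real_inner_self_eq_norm_sq]
        ring
      rw [hinner, hwznorm] at hd
      rw [hcdef]
      nlinarith [hd]
    have hΔz : 0 ≤ F z - Fstar := sub_nonneg.2 (hstar z)
    have hΔw : 0 ≤ F w - Fstar := sub_nonneg.2 (hstar w)
    have hplz : 2 * μ * (F z - Fstar) ≤ g ^ 2 := by
      have h := hpl z
      rw [← hgdef] at h
      have h2 : F z - Fstar ≤ g ^ 2 / (2 * μ) := by
        rw [div_eq_inv_mul, ← one_div]
        exact h
      have h3 := (le_div_iff₀ (by positivity : (0:ℝ) < 2 * μ)).mp h2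
      linarith
    constructor
    · nlinarith [mul_le_mul_of_nonneg_left hplz hc.le]
    · rcases eq_or_lt_of_le hΔz with h0 | hpos
      · -- F z = Fstar : z is a minimizer, gradient zero
        have hzmin : ∀ y, F z ≤ F y := by
          intro y
          have := hstar y
          linarith [h0]
        have hg' : F' z = 0 := grad_zero_at_min F F' hdiff z hzmin
        have hwzeq : w = z := by rw [hwdef, hg']; simp
        rw [hwzeq]
        simp
      · -- positive gap
        set a : ℝ := Real.sqrt (F z - Fstar) with hadef
        set b : ℝ := Real.sqrt (F w - Fstar) with hbdef
        have ha2 : a ^ 2 = F z - Fstar := Real.sq_sqrt hΔz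
        have hb2 : b ^ 2 = F w - Fstar := Real.sq_sqrt hΔw
        have ha0 : 0 < a := Real.sqrt_pos.2 hpos
        have hb0 : 0 ≤ b := Real.sqrt_nonneg _
        have hba : b ≤ a := by
          apply Real.sqrt_le_sqrt
          nlinarith
        have hga : s * a ≤ g := by
          nlinarith [sq_nonneg (g - s * a), sq_nonneg (g + s * a), mul_pos hs ha0]
        have h1 : c * s * g ≤ 2 * (a - b) := by
          have h2 : c * s * g * a ≤ 2 * (a - b) * a := by
            nlinarith [sq_nonneg (a - b), mul_le_mul_of_nonneg_left hga (mul_nonneg hc.le hg0)]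
          exact le_of_mul_le_mul_right (by linarith) ha0
        have hfin : K * (a - b) - η * g = (η / (c * s)) * (2 * (a - b) - c * s * g) := by
          rw [hKdef]; field_simp
        have : 0 ≤ K * (a - b) - η * g := by
          rw [hfin]
          apply mul_nonneg (by positivity)
          linarith
        rw [hwznorm]
        linarith
  -- the gradient descent sequence
  set T : H → H := fun z => z - η • F' z with hTdef
  set X : ℕ → H := fun n => T^[n] x₀ with hXdef
  have hX0 : X 0 = x₀ := rfl
  have hXsucc : ∀ n, X (n + 1) = X n - η • F' (X n) := by
    intro n
    rw [hXdef]
    simp only [Function.iterate_succ_apply']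
    rfl
  set Δ : ℕ → ℝ := fun n => F (X n) - Fstar with hΔdef
  have hΔnn : ∀ n, 0 ≤ Δ n := fun n => sub_nonneg.2 (hstar _)
  set r : ℝ := max 0 (1 - 2 * μ * c) with hrdef
  have hr0 : 0 ≤ r := le_max_left _ _
  have hr1 : r < 1 := by
    apply max_lt one_pos
    nlinarith [mul_pos hμ hc]
  have hΔstep : ∀ n, Δ (n + 1) ≤ r * Δ n := by
    intro n
    have h := (hstep (X n)).1
    rw [← hXsucc n] at h
    calc Δ (n + 1) ≤ (1 - 2 * μ * c) * Δ n := h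
    _ ≤ r * Δ n := mul_le_mul_of_nonneg_right (le_max_right _ _) (hΔnn n)
  have hgeo : ∀ n, Δ n ≤ r ^ n * Δ 0 := by
    intro n
    induction n with
    | zero => simp
    | succ k ih =>
      calc Δ (k + 1) ≤ r * Δ k := hΔstep k
      _ ≤ r * (r ^ k * Δ 0) := mul_le_mul_of_nonneg_left ih hr0
      _ = r ^ (k + 1) * Δ 0 := by ring
  have hsn : ∀ n, ‖X (n + 1) - X n‖ ≤ K * (Real.sqrt (Δ n) - Real.sqrt (Δ (n + 1))) := by
    intro n
    have h := (hstep (X n)).2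
    rw [← hXsucc n] at h
    exact h
  have htel : ∀ n, ‖x₀ - X n‖ ≤ K * (Real.sqrt (Δ 0) - Real.sqrt (Δ n)) := by
    intro n
    induction n with
    | zero => simp [hX0]
    | succ k ih =>
      have htri : ‖x₀ - X (k + 1)‖ ≤ ‖x₀ - X k‖ + ‖X (k + 1) - X k‖ := by
        have : x₀ - X (k + 1) = (x₀ - X k) + (X k - X (k + 1)) := by abel
        rw [this]
        calc _ ≤ ‖x₀ - X k‖ + ‖X k - X (k + 1)‖ := norm_add_le _ _
        _ = ‖x₀ - X k‖ + ‖X (k + 1) - X k‖ := by rw [norm_sub_rev (X k) (X (k + 1))]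
      have := hsn k
      calc ‖x₀ - X (k + 1)‖ ≤ ‖x₀ - X k‖ + ‖X (k + 1) - X k‖ := htri
      _ ≤ K * (Real.sqrt (Δ 0) - Real.sqrt (Δ k))
          + K * (Real.sqrt (Δ k) - Real.sqrt (Δ (k + 1))) := add_le_add ih this
      _ = K * (Real.sqrt (Δ 0) - Real.sqrt (Δ (k + 1))) := by ring
  have hsqrtpow : ∀ n : ℕ, Real.sqrt (r ^ n) = Real.sqrt r ^ n := by
    intro n
    induction n with
    | zero => simp
    | succ k ih => rw [pow_succ, Real.sqrt_mul (pow_nonneg hr0 k), ih, pow_succ]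
  have hsqrtgeo : ∀ n, Real.sqrt (Δ n) ≤ Real.sqrt r ^ n * Real.sqrt (Δ 0) := by
    intro n
    calc Real.sqrt (Δ n) ≤ Real.sqrt (r ^ n * Δ 0) := Real.sqrt_le_sqrt (hgeo n)
    _ = Real.sqrt r ^ n * Real.sqrt (Δ 0) := by
        rw [Real.sqrt_mul (pow_nonneg hr0 n), hsqrtpow n]
  have hsqrt_r_lt : Real.sqrt r < 1 := by
    rw [show (1:ℝ) = Real.sqrt 1 by simp]
    exact Real.sqrt_lt_sqrt hr0 hr1
  have hcau : CauchySeq X := by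
    apply cauchySeq_of_le_geometric (Real.sqrt r) (K * Real.sqrt (Δ 0)) hsqrt_r_lt
    intro n
    calc dist (X n) (X (n + 1)) = ‖X (n + 1) - X n‖ := by rw [dist_eq_norm, norm_sub_rev]
    _ ≤ K * (Real.sqrt (Δ n) - Real.sqrt (Δ (n + 1))) := hsn n
    _ ≤ K * Real.sqrt (Δ n) := by
        have h01 := Real.sqrt_nonneg (Δ (n + 1))
        have h02 := Real.sqrt_nonneg (Δ n)
        nlinarith
    _ ≤ K * (Real.sqrt r ^ n * Real.sqrt (Δ 0)) :=
        mul_le_mul_of_nonneg_left (hsqrtgeo n) hK0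
    _ = K * Real.sqrt (Δ 0) * Real.sqrt r ^ n := by ring
  obtain ⟨p, hp⟩ := cauchySeq_tendsto_of_complete hcau
  have hFcont : Continuous F := Differentiable.continuous (fun x => (hdiff x).differentiableAt)
  have hΔ0lim : Filter.Tendsto Δ Filter.atTop (nhds 0) := by
    apply squeeze_zero hΔnn hgeo
    have h := (tendsto_pow_atTop_nhds_zero_of_lt_one hr0 hr1).mul_const (Δ 0)
    simpa using h
  have hFp : F p = Fstar := by
    have h1 : Filter.Tendsto (fun n => F (X n)) Filter.atTop (nhds (F p)) :=
      (hFcont.continuousAt (x := p)).tendsto.comp hp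
    have h2 : Filter.Tendsto (fun n => F (X n)) Filter.atTop (nhds Fstar) := by
      simpa [hΔdef] using hΔ0lim.add_const Fstar
    exact tendsto_nhds_unique h1 h2
  refine ⟨p, fun y => hFp ▸ hstar y, ?_⟩
  have hnormlim : Filter.Tendsto (fun n => ‖x₀ - X n‖) Filter.atTop (nhds ‖x₀ - p‖) :=
    ((hp.const_sub x₀).norm)
  have hbound : ∀ n, ‖x₀ - X n‖ ≤ K * Real.sqrt (Δ 0) := by
    intro n
    refine (htel n).trans ?_
    have h01 := Real.sqrt_nonneg (Δ n)
    have h02 := Real.sqrt_nonneg (Δ 0)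
    nlinarith
  have hfinal := le_of_tendsto hnormlim (Filter.Eventually.of_forall hbound)
  have hΔ00 : Δ 0 = F x₀ - Fstar := by simp [hΔdef, hX0]
  rw [hΔ00] at hfinal
  exact hfinal

end Helpers

/-- For convex functions with Lipschitz gradient, PL implies quasi-strong convexity
with parameter μ²/L. -/

theorem pl_implies_qsc {H : Type*} [NormedAddCommGroup H] [InnerProductSpace ℝ H]
    [CompleteSpace H]
    (F : H → ℝ) (F' : H → H) (hdiff : ∀ x, HasGradientAt F (F' x) x)
    (hconv : ConvexOn ℝ Set.univ F)
    (L : ℝ) (hL : 0 < L) (hlip : LipschitzWith (Real.toNNReal L) F')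
    (Xs : Set H) (hXs : Xs = {x | ∀ y, F x ≤ F y}) (hne : Xs.Nonempty)
    (Fstar : ℝ) (hFstar : ∀ x ∈ Xs, F x = Fstar)
    (μ : ℝ) (hμ : 0 < μ)
    (hpl : ∀ x, F x - Fstar ≤ 1 / (2 * μ) * ‖F' x‖ ^ 2) :
    ∀ x xb, xb ∈ Xs → (∀ y ∈ Xs, ‖x - xb‖ ≤ ‖x - y‖) →
      F x + ⟪F' x, xb - x⟫ + μ ^ 2 / (2 * L) * ‖x - xb‖ ^ 2 ≤ F xb := by
  intro x xb hxb hproj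
  have hxb' : ∀ y, F xb ≤ F y := by rw [hXs] at hxb; exact hxb
  have hFxb : F xb = Fstar := hFstar xb hxb
  have hstar : ∀ y, Fstar ≤ F y := fun y => hFxb ▸ hxb' y
  have hgxb : F' xb = 0 := grad_zero_at_min F F' hdiff xb hxb'
  have hbh := baillon_haddad F F' hdiff hconv L hL hlip x xb
  rw [hgxb, zero_sub, norm_neg] at hbh
  set d : ℝ := ‖x - xb‖ with hddef
  set s : ℝ := Real.sqrt (2 * μ) with hsdef
  have hs : 0 < s := Real.sqrt_pos.2 (by linarith)
  have hs2 : s ^ 2 = 2 * μ := Real.sq_sqrt (by linarith)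
  have hΔnn : 0 ≤ F x - Fstar := sub_nonneg.2 (hstar x)
  -- step bound for each n
  have hstepn : ∀ n : ℕ, d * (1 - 1 / (2 * ((n : ℝ) + 1))) ≤
      2 / s * Real.sqrt (F x - Fstar) := by
    intro n
    obtain ⟨m, hmdef⟩ : ∃ m : ℝ, m = (n : ℝ) + 1 := ⟨_, rfl⟩
    rw [← hmdef]
    have hm1 : (1 : ℝ) ≤ m := by
      have : (0:ℝ) ≤ (n:ℝ) := Nat.cast_nonneg n
      rw [hmdef]; linarith
    obtain ⟨η, hηdef⟩ : ∃ η : ℝ, η = 1 / (L * m) := ⟨_, rfl⟩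
    have hm0 : 0 < m := by linarith
    have hη : 0 < η := by rw [hηdef]; positivity
    have hηL : η * L ≤ 1 := by
      rw [hηdef]
      rw [div_mul_eq_mul_div, one_mul, div_le_one (by positivity)]
      nlinarith
    obtain ⟨p, hpmin, hpb⟩ := pl_dist_bound F F' hdiff L hL hlip Fstar hstar μ hμ hpl x η hη hηL
    have hdp : d ≤ ‖x - p‖ := hproj p (by rw [hXs]; exact hpmin)
    have hd : d ≤ 2 * η / ((η - L * η ^ 2 / 2) * s) * Real.sqrt (F x - Fstar) :=
      hdp.trans hpb
    have hcpos : 0 < η - L * η ^ 2 / 2 := by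
      nlinarith [mul_le_mul_of_nonneg_right hηL hη.le]
    have h2m : 0 < 1 - 1 / (2 * m) := by
      have : 1 / (2 * m) ≤ 1 / 2 := by
        apply one_div_le_one_div_of_le <;> linarith
      linarith
    have hA : 2 * η / ((η - L * η ^ 2 / 2) * s) * (1 - 1 / (2 * m)) = 2 / s := by
      have hsub : η - L * η ^ 2 / 2 = η * (1 - 1 / (2 * m)) := by
        rw [hηdef]
        field_simp
      rw [hsub]
      obtain ⟨t, htdef⟩ : ∃ t : ℝ, t = 1 - 1 / (2 * m) := ⟨_, rfl⟩
      rw [← htdef]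
      have ht : t ≠ 0 := by rw [htdef]; exact h2m.ne'
      have hη' : η ≠ 0 := hη.ne'
      have hs' : s ≠ 0 := hs.ne'
      field_simp
    calc d * (1 - 1 / (2 * m))
        ≤ (2 * η / ((η - L * η ^ 2 / 2) * s) * Real.sqrt (F x - Fstar)) * (1 - 1 / (2 * m)) :=
          mul_le_mul_of_nonneg_right hd h2m.le
      _ = (2 * η / ((η - L * η ^ 2 / 2) * s) * (1 - 1 / (2 * m))) * Real.sqrt (F x - Fstar) := by
          ring
      _ = 2 / s * Real.sqrt (F x - Fstar) := by rw [hA]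
  -- limit n → ∞
  have hdle : d ≤ 2 / s * Real.sqrt (F x - Fstar) := by
    have h0 : Filter.Tendsto (fun n : ℕ => 1 / ((n : ℝ) + 1)) Filter.atTop (nhds 0) :=
      tendsto_one_div_add_atTop_nhds_zero_nat
    have h1 : Filter.Tendsto (fun n : ℕ => d * (1 - 1 / (2 * ((n : ℝ) + 1))))
        Filter.atTop (nhds (d * (1 - (1 / 2) * 0))) := by
      have heq : (fun n : ℕ => d * (1 - 1 / (2 * ((n : ℝ) + 1))))
          = fun n : ℕ => d * (1 - (1 / 2) * (1 / ((n : ℝ) + 1))) := by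
        funext n
        have hn0 : ((n:ℝ) + 1) ≠ 0 := by positivity
        field_simp
      rw [heq]
      exact tendsto_const_nhds.mul (tendsto_const_nhds.sub (h0.const_mul (1 / 2)))
    have h2 : Filter.Tendsto (fun n : ℕ => d * (1 - 1 / (2 * ((n : ℝ) + 1))))
        Filter.atTop (nhds d) := by
      have hval : d * (1 - (1 / 2) * 0) = d := by ring
      rw [hval] at h1
      exact h1
    exact le_of_tendsto h2 (Filter.Eventually.of_forall hstepn)
  -- square it : quadratic growth
  have hd0 : 0 ≤ d := norm_nonneg _
  have hqg : d ^ 2 ≤ 2 / μ * (F x - Fstar) := by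
    have hsq := pow_le_pow_left₀ hd0 hdle 2
    rw [mul_pow, Real.sq_sqrt hΔnn, div_pow, hs2] at hsq
    calc d ^ 2 ≤ 2 ^ 2 / (2 * μ) * (F x - Fstar) := hsq
    _ = 2 / μ * (F x - Fstar) := by field_simp
  -- combine with PL and Baillon-Haddad
  have hplx := hpl x
  have hgsq : μ ^ 2 * d ^ 2 ≤ ‖F' x‖ ^ 2 := by
    have h1 : μ ^ 2 * d ^ 2 ≤ μ ^ 2 * (2 / μ * (F x - Fstar)) :=
      mul_le_mul_of_nonneg_left hqg (by positivity)
    have h2 : μ ^ 2 * (2 / μ * (F x - Fstar)) = 2 * μ * (F x - Fstar) := by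
      field_simp
    have h3 : 2 * μ * (F x - Fstar) ≤ ‖F' x‖ ^ 2 := by
      have h4 : F x - Fstar ≤ ‖F' x‖ ^ 2 / (2 * μ) := by
        rw [div_eq_inv_mul, ← one_div]; exact hplx
      have h5 := (le_div_iff₀ (by positivity : (0:ℝ) < 2 * μ)).mp h4
      linarith
    linarith
  have hfinal : μ ^ 2 / (2 * L) * d ^ 2 ≤ 1 / (2 * L) * ‖F' x‖ ^ 2 := by
    have h6 : 1 / (2 * L) * (μ ^ 2 * d ^ 2) ≤ 1 / (2 * L) * ‖F' x‖ ^ 2 :=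
      mul_le_mul_of_nonneg_left hgsq (by positivity)
    calc μ ^ 2 / (2 * L) * d ^ 2 = 1 / (2 * L) * (μ ^ 2 * d ^ 2) := by ring
    _ ≤ 1 / (2 * L) * ‖F' x‖ ^ 2 := h6
  linarith
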